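/- If λ is a weakly inaccessible cardinal and K is a category that is (μ, <λ)-accessible for unboundedly many regular μ < λ, then K is (λ, <λ)-accessible. -/

import Mathlib

open CategoryTheory Limits Cardinal

universe u v u₂ v₂

/-- A preorder is `μ`-directed if every subset of cardinality `< μ` has an upper bound. -/
def IsCardDirected (μ : Cardinal.{v}) (J : Type v) [Preorder J] : Prop :=
  ∀ S : Set J, #S < μ → ∃ b, ∀ s ∈ S, s ≤ b

/-- An object is `μ`-presentable if its hom-functor preserves `μ`-directed colimits. -/
def IsPresentableObj (μ : Cardinal.{v}) {K : Type u} [Category.{v} K] (M : K) : Prop :=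
  ∀ (J : Type v) (_ : Preorder J), IsCardDirected μ J →
    Nonempty (PreservesColimitsOfShape J (coyoneda.obj (Opposite.op M)))

/-- `(<λ)`-presentable: `θ`-presentable for some regular `θ < max(λ, ℵ₁)`. -/
def IsLtPresentableObj (lam : Cardinal.{v}) {K : Type u} [Category.{v} K] (M : K) : Prop :=
  ∃ θ : Cardinal.{v}, θ.IsRegular ∧ θ < max lam (Cardinal.aleph 1) ∧ IsPresentableObj θ M

/-- `M` has presentability rank `lam`: the least regular cardinal at which `M` is presentable. -/
def HasPresRank (lam : Cardinal.{v}) {K : Type u} [Category.{v} K] (M : K) : Prop :=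
  lam.IsRegular ∧ IsPresentableObj lam M ∧
    ∀ ν : Cardinal.{v}, ν.IsRegular → IsPresentableObj ν M → lam ≤ ν

/-- `K` has all `μ`-directed colimits. -/
def HasMuDirectedColimits (μ : Cardinal.{v}) (K : Type u) [Category.{v} K] : Prop :=
  ∀ (J : Type v) (_ : Preorder J), IsCardDirected μ J → HasColimitsOfShape J K

/-- `(μ, <λ)`-accessibility of a category `K`. -/
def IsAccCat (μ lam : Cardinal.{v}) (K : Type u) [Category.{v} K] : Prop :=
  HasMuDirectedColimits μ K ∧
  (∃ S : Set K, Small.{v} S ∧ ∀ M : K, IsLtPresentableObj lam M → ∃ N ∈ S, Nonempty (M ≅ N)) ∧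
  (∀ M : K, ∃ (J : Type v) (_ : Preorder J) (D : J ⥤ K) (c : Cocone D),
     IsCardDirected μ J ∧ (∀ j, IsLtPresentableObj lam (D.obj j)) ∧
     Nonempty (IsColimit c) ∧ c.pt = M)

namespace Stmt12Aux

open scoped Classical

/-- Context: a family of presentations of a fixed object `M`. -/
structure Ctx (lam : Cardinal.{v}) {K : Type u} [Category.{v} K] (M : K) where
  lamreg : lam.IsRegular
  lamlim : ∀ β : Cardinal.{v}, β < lam → Order.succ β < lam
  lam0 : ℵ₀ < lam
  hasCol : ∀ (J : Type v) (_ : Preorder J), IsCardDirected lam J → HasColimitsOfShape J K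
  ii : Type v
  JJ : ii → Type v
  pre : ∀ i, Preorder (JJ i)
  mu : ii → Cardinal.{v}
  mureg : ∀ i, (mu i).IsRegular
  dir : ∀ i, IsCardDirected (mu i) (JJ i)
  DD : ∀ i, JJ i ⥤ K
  co : ∀ i, Cocone (DD i)
  colim : ∀ i, IsColimit (co i)
  hpt : ∀ i, (co i).pt = M
  ltp : ∀ i j, IsLtPresentableObj lam ((DD i).obj j)
  unbdd : ∀ β : Cardinal.{v}, β < lam → ∃ i, β ≤ mu i
  Th : Type v
  hTh : lam ≤ #Th

attribute [instance] Ctx.pre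

variable {K : Type u} [Category.{v} K] {lam : Cardinal.{v}} {M : K} (X : Ctx lam M)

lemma down_directed {μ ν : Cardinal.{v}} {J : Type v} [Preorder J]
    (h : IsCardDirected μ J) (hle : ν ≤ μ) : IsCardDirected ν J :=
  fun S hS => h S (hS.trans_le hle)

lemma aleph1_le (h : ℵ₀ < lam) : (Cardinal.aleph 1) ≤ lam := by
  rw [← Cardinal.succ_aleph0]
  exact Order.succ_le_of_lt h

lemma max_lam (h : ℵ₀ < lam) : max lam (Cardinal.aleph 1) = lam := max_eq_left (aleph1_le h)

/-- The index type for elements of presentations, with a tag for freshness. -/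
def Ctx.A : Type v := (Σ i : X.ii, X.JJ i) × X.Th

def Ctx.obj (a : X.A) : K := (X.DD a.1.1).obj a.1.2

def Ctx.fι (i : X.ii) (j : X.JJ i) : (X.DD i).obj j ⟶ M :=
  (X.co i).ι.app j ≫ eqToHom (X.hpt i)

def Ctx.fM (a : X.A) : X.obj a ⟶ M := X.fι a.1.1 a.1.2

lemma Ctx.fι_nat {i : X.ii} {j j' : X.JJ i} (h : j ≤ j') :
    (X.DD i).map (homOfLE h) ≫ X.fι i j' = X.fι i j := by
  rw [Ctx.fι, Ctx.fι, ← Category.assoc, (X.co i).w (homOfLE h)]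

lemma Ctx.homext (i : X.ii) {Y : K} {x y : M ⟶ Y}
    (h : ∀ j, X.fι i j ≫ x = X.fι i j ≫ y) : x = y := by
  have h2 : eqToHom (X.hpt i) ≫ x = eqToHom (X.hpt i) ≫ y := by
    apply (X.colim i).hom_ext
    intro j
    simpa [Ctx.fι] using h j
  rwa [cancel_epi] at h2

/-- Descend a natural family along presentation `i`. -/
noncomputable def Ctx.descM (i : X.ii) {Y : K} (g : ∀ j, (X.DD i).obj j ⟶ Y)
    (nat : ∀ {j j' : X.JJ i} (h : j ≤ j'), (X.DD i).map (homOfLE h) ≫ g j' = g j) : M ⟶ Y :=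
  eqToHom (X.hpt i).symm ≫ (X.colim i).desc
    ⟨Y, { app := g
          naturality := by
            intro j j' f
            have : f = homOfLE (leOfHom f) := Subsingleton.elim _ _
            rw [this]
            simpa using nat (leOfHom f) }⟩

lemma Ctx.descM_fac (i : X.ii) {Y : K} (g : ∀ j, (X.DD i).obj j ⟶ Y)
    (nat : ∀ {j j' : X.JJ i} (h : j ≤ j'), (X.DD i).map (homOfLE h) ≫ g j' = g j) (j : X.JJ i) :
    X.fι i j ≫ X.descM i g nat = g j := by
  rw [Ctx.fι, Ctx.descM, Category.assoc, ← Category.assoc (eqToHom _), eqToHom_trans,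
    eqToHom_refl, Category.id_comp]
  exact (X.colim i).fac _ j

lemma Ctx.rk_spec (a : X.A) : ∃ θ : Cardinal.{v},
    θ.IsRegular ∧ θ < lam ∧ IsPresentableObj θ (X.obj a) := by
  obtain ⟨θ, h1, h2, h3⟩ := X.ltp a.1.1 a.1.2
  exact ⟨θ, h1, by rwa [max_lam X.lam0] at h2, h3⟩

noncomputable def Ctx.rk (a : X.A) : Cardinal.{v} := (X.rk_spec a).choose

lemma Ctx.rk_reg (a : X.A) : (X.rk a).IsRegular := (X.rk_spec a).choose_spec.1
lemma Ctx.rk_lt (a : X.A) : X.rk a < lam := (X.rk_spec a).choose_spec.2.1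
lemma Ctx.rk_pres (a : X.A) : IsPresentableObj (X.rk a) (X.obj a) :=
  (X.rk_spec a).choose_spec.2.2

noncomputable def Ctx.pres (a : X.A) {J : Type v} [Preorder J]
    (hJ : IsCardDirected (X.rk a) J) :
    PreservesColimitsOfShape J (coyoneda.obj (Opposite.op (X.obj a))) :=
  (X.rk_pres a J _ hJ).some

lemma Ctx.JJ_nonempty (i : X.ii) : Nonempty (X.JJ i) := by
  obtain ⟨b, -⟩ := X.dir i ∅ (by
    simpa using (X.mureg i).pos)
  exact ⟨b⟩

lemma Ctx.JJ_pair (i : X.ii) (x y : X.JJ i) : ∃ z, x ≤ z ∧ y ≤ z := by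
  obtain ⟨b, hb⟩ := X.dir i {x, y}
    (((Set.finite_singleton y).insert x).lt_aleph0.trans_le (X.mureg i).aleph0_le)
  exact ⟨b, hb x (by simp), hb y (by simp)⟩

lemma Ctx.JJ_directed (i : X.ii) : IsDirected (X.JJ i) (· ≤ ·) :=
  ⟨fun x y => by simpa using X.JJ_pair i x y⟩

/-- Factor a morphism from a `<λ`-presentable object through a stage of presentation `i`. -/
lemma Ctx.factor (i : X.ii) (a : X.A) (hle : X.rk a ≤ X.mu i) (f : X.obj a ⟶ M) :
    ∃ (j : X.JJ i) (g : X.obj a ⟶ (X.DD i).obj j), g ≫ X.fι i j = f := by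
  haveI := X.pres a (down_directed (X.dir i) hle)
  have hc : IsColimit ((coyoneda.obj (Opposite.op (X.obj a))).mapCocone (X.co i)) :=
    isColimitOfPreserves _ (X.colim i)
  obtain ⟨j, g, hg⟩ := Types.jointly_surjective _ hc (f ≫ eqToHom (X.hpt i).symm)
  refine ⟨j, g, ?_⟩
  have : g ≫ (X.co i).ι.app j = f ≫ eqToHom (X.hpt i).symm := hg
  rw [Ctx.fι, ← Category.assoc, this, Category.assoc, eqToHom_trans, eqToHom_refl,
    Category.comp_id]

/-- Two factorizations agreeing over `M` are equalized at a later stage. -/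
lemma Ctx.equalize (i : X.ii) (a : X.A) (hle : X.rk a ≤ X.mu i) {j : X.JJ i}
    (x y : X.obj a ⟶ (X.DD i).obj j) (h : x ≫ X.fι i j = y ≫ X.fι i j) :
    ∃ (j' : X.JJ i) (hj : j ≤ j'),
      x ≫ (X.DD i).map (homOfLE hj) = y ≫ (X.DD i).map (homOfLE hj) := by
  haveI := X.JJ_nonempty i
  haveI := X.JJ_directed i
  haveI := X.pres a (down_directed (X.dir i) hle)
  have hc : IsColimit ((coyoneda.obj (Opposite.op (X.obj a))).mapCocone (X.co i)) :=
    isColimitOfPreserves _ (X.colim i)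
  have h' : x ≫ (X.co i).ι.app j = y ≫ (X.co i).ι.app j := by
    have := h
    rw [Ctx.fι, ← Category.assoc, ← Category.assoc] at this
    exact (cancel_mono (eqToHom (X.hpt i))).mp this
  have h'' : ((coyoneda.obj (Opposite.op (X.obj a))).mapCocone (X.co i)).ι.app j x =
      ((coyoneda.obj (Opposite.op (X.obj a))).mapCocone (X.co i)).ι.app j y := h'
  obtain ⟨k, f1, f2, hk⟩ := (Types.FilteredColimit.isColimit_eq_iff _ hc).mp h''
  refine ⟨k, leOfHom f1, ?_⟩
  have e1 : f1 = homOfLE (leOfHom f1) := Subsingleton.elim _ _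
  have e2 : f2 = homOfLE (leOfHom f1) := Subsingleton.elim _ _
  have hk' : x ≫ (X.DD i).map f1 = y ≫ (X.DD i).map f2 := hk
  rwa [e1, e2] at hk'

/-- The λ-directed poset of small factorization diagrams. -/
structure Ctx.P where
  T : Set X.A
  card : #T < lam
  a : X.A
  amem : a ∈ T
  h : ∀ t ∈ T, X.obj t ⟶ X.obj a
  comm : ∀ t (ht : t ∈ T), h t ht ≫ X.fM a = X.fM t
  hid : h a amem = 𝟙 (X.obj a)

namespace Ctx.P

variable {X}

lemma hid' (p : X.P) (ht : p.a ∈ p.T) : p.h p.a ht = 𝟙 (X.obj p.a) := p.hid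

instance : Preorder X.P where
  le p q := ∃ hsub : p.T ⊆ q.T, ∀ t (ht : t ∈ p.T),
    q.h t (hsub ht) = p.h t ht ≫ q.h p.a (hsub p.amem)
  le_refl p := ⟨le_refl _, fun t ht => by rw [p.hid', Category.comp_id]⟩
  le_trans p q r := by
    rintro ⟨s1, h1⟩ ⟨s2, h2⟩
    refine ⟨s1.trans s2, fun t ht => ?_⟩
    rw [h2 t (s1 ht), h1 t ht, Category.assoc, ← h2 p.a (s1 p.amem)]

lemma le_def {p q : X.P} (hpq : p ≤ q) :
    ∃ hsub : p.T ⊆ q.T, ∀ t (ht : t ∈ p.T),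
      q.h t (hsub ht) = p.h t ht ≫ q.h p.a (hsub p.amem) := hpq

lemma subset_of_le {p q : X.P} (hpq : p ≤ q) : p.T ⊆ q.T := hpq.choose

end Ctx.P

/-- The diagram over `X.P`. -/
@[simps]
noncomputable def Ctx.Dp : X.P ⥤ K where
  obj p := X.obj p.a
  map {p q} f := q.h p.a ((Ctx.P.subset_of_le (leOfHom f)) p.amem)
  map_id p := p.hid' _
  map_comp {p q r} f g := by
    obtain ⟨s1, h1⟩ := Ctx.P.le_def (leOfHom f)
    obtain ⟨s2, h2⟩ := Ctx.P.le_def (leOfHom g)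
    have := h2 p.a (s1 p.amem)
    simp only [this]

/-- The cocone over `X.Dp` with point `M`. -/
@[simps]
noncomputable def Ctx.cP : Cocone X.Dp where
  pt := M
  ι := { app := fun p => X.fM p.a
         naturality := by
           intro p q f
           have := q.comm p.a ((Ctx.P.subset_of_le (leOfHom f)) p.amem)
           exact this.trans (Category.comp_id _).symm }

lemma Ctx.fresh (T : Set X.A) (hT : #T < lam) : ∃ tag : X.Th, ∀ t ∈ T, t.2 ≠ tag := by
  by_contra hcon
  push_neg at hcon
  have hsub : (Set.univ : Set X.Th) ⊆ Prod.snd '' T := by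
    intro tag _
    obtain ⟨t, ht, htag⟩ := hcon tag
    exact ⟨t, ht, htag⟩
  have : #X.Th ≤ #T := by
    calc #X.Th = #(Set.univ : Set X.Th) := Cardinal.mk_univ.symm
    _ ≤ #(Prod.snd '' T) := Cardinal.mk_le_mk_of_subset hsub
    _ ≤ #T := Cardinal.mk_image_le
  exact absurd (hT.trans_le X.hTh) (not_lt.mpr this)

lemma Ctx.card_insert {T : Set X.A} (hT : #T < lam) (a : X.A) :
    #(insert a T : Set X.A) < lam := by
  refine lt_of_le_of_lt Cardinal.mk_insert_le ?_
  exact Cardinal.add_lt_of_lt X.lamreg.aleph0_le hT (lt_of_lt_of_le Cardinal.one_lt_aleph0 X.lamreg.aleph0_le)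

/-- Extend an element of `P` by a new vertex. -/
noncomputable def Ctx.ext (p : X.P) (a' : X.A) (ha' : a' ∉ p.T)
    (G : X.obj p.a ⟶ X.obj a') (hG : G ≫ X.fM a' = X.fM p.a) : X.P where
  T := insert a' p.T
  card := X.card_insert p.card a'
  a := a'
  amem := Set.mem_insert _ _
  h t ht := if he : t = a' then eqToHom (congrArg X.obj he)
    else p.h t ((Set.mem_insert_iff.mp ht).resolve_left he) ≫ G
  comm := by
    intro t ht
    by_cases he : t = a'
    · subst he
      rw [dif_pos rfl, show eqToHom (congrArg X.obj rfl) = 𝟙 (X.obj t) from eqToHom_refl _ _,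
        Category.id_comp]
    · rw [dif_neg he, Category.assoc, hG, p.comm]
  hid := by
    rw [dif_pos rfl]
    exact eqToHom_refl _ _

lemma Ctx.ext_le (p : X.P) (a' : X.A) (ha' : a' ∉ p.T)
    (G : X.obj p.a ⟶ X.obj a') (hG : G ≫ X.fM a' = X.fM p.a) :
    p ≤ X.ext p a' ha' G hG := by
  refine ⟨Set.subset_insert _ _, fun t ht => ?_⟩
  have h1 : t ≠ a' := fun he => ha' (he ▸ ht)
  have h2 : p.a ≠ a' := fun he => ha' (he ▸ p.amem)
  show (if he : t = a' then _ else _) = p.h t ht ≫ (if he : p.a = a' then _ else _)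
  rw [dif_neg h1, dif_neg h2, p.hid', Category.id_comp]

lemma Ctx.ext_h (p : X.P) (a' : X.A) (ha' : a' ∉ p.T)
    (G : X.obj p.a ⟶ X.obj a') (hG : G ≫ X.fM a' = X.fM p.a) (t : X.A) (ht : t ∈ p.T)
    (ht' : t ∈ (X.ext p a' ha' G hG).T) :
    (X.ext p a' ha' G hG).h t ht' = p.h t ht ≫ G := by
  have h1 : t ≠ a' := fun he => ha' (he ▸ ht)
  show (if he : t = a' then _ else _) = _
  exact dif_neg h1

lemma Ctx.ext_map (p : X.P) (a' : X.A) (ha' : a' ∉ p.T)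
    (G : X.obj p.a ⟶ X.obj a') (hG : G ≫ X.fM a' = X.fM p.a) :
    X.Dp.map (homOfLE (X.ext_le p a' ha' G hG)) = G := by
  have h2 : p.a ≠ a' := fun he => ha' (he ▸ p.amem)
  show (X.ext p a' ha' G hG).h p.a (Set.mem_insert_iff.mpr (Or.inr p.amem)) = G
  show (if he : p.a = a' then _ else _) = G
  rw [dif_neg h2, p.hid', Category.id_comp]

/-- A default tag. -/
noncomputable def Ctx.tag0 : X.Th := by
  have : #X.Th ≠ 0 := by
    intro h
    exact absurd (X.hTh.trans_eq h) (not_le.mpr X.lamreg.pos)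
  exact (Cardinal.mk_ne_zero_iff.mp this).some

/-- The canonical element of `A` attached to a stage of presentation `i`. -/
noncomputable def Ctx.anode (i : X.ii) (j : X.JJ i) : X.A := (⟨i, j⟩, X.tag0)

lemma Ctx.anode_inj {i : X.ii} {j j' : X.JJ i} (h : X.anode i j = X.anode i j') : j = j' := by
  have := congrArg Prod.fst h
  exact eq_of_heq (Sigma.mk.inj_iff.mp this).2

lemma Ctx.fM_anode (i : X.ii) (j : X.JJ i) : X.fM (X.anode i j) = X.fι i j := rfl

lemma Ctx.node_key (i : X.ii) (G : Set (X.JJ i)) (top : X.JJ i)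
    (hub : ∀ x ∈ G, x ≤ top) (x : X.JJ i) (hx : x ∈ G) (t : X.A) (he : t = X.anode i x) :
    (eqToHom (congrArg X.obj he) ≫ (X.DD i).map (homOfLE (hub x hx))) ≫
      X.fM (X.anode i top) = X.fM t := by
  subst he
  erw [eqToHom_refl, Category.id_comp, X.fM_anode, X.fM_anode,
    X.fι_nat]
  rfl

lemma Ctx.node_key2 (i : X.ii) (G : Set (X.JJ i)) (top : X.JJ i)
    (hub : ∀ x ∈ G, x ≤ top) (x : X.JJ i) (hx : x ∈ G) (he : X.anode i top = X.anode i x) :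
    eqToHom (congrArg X.obj he) ≫ (X.DD i).map (homOfLE (hub x hx)) =
      𝟙 (X.obj (X.anode i top)) := by
  have hx2 : x = top := (X.anode_inj he).symm
  subst hx2
  erw [eqToHom_refl, Category.id_comp,
    show homOfLE (hub x hx) = 𝟙 x from Subsingleton.elim _ _]
  exact (X.DD i).map_id x

/-- A "node": an element of `P` supported on a single presentation. -/
noncomputable def Ctx.node (i : X.ii) (G : Set (X.JJ i)) (top : X.JJ i) (htop : top ∈ G)
    (hub : ∀ x ∈ G, x ≤ top) (hcard : #G < lam) : X.P where
  T := X.anode i '' G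
  card := lt_of_le_of_lt Cardinal.mk_image_le hcard
  a := X.anode i top
  amem := ⟨top, htop, rfl⟩
  h t ht := eqToHom (congrArg X.obj ht.choose_spec.2.symm) ≫
      (X.DD i).map (homOfLE (hub _ ht.choose_spec.1))
  comm := fun t ht => X.node_key i G top hub ht.choose ht.choose_spec.1 t ht.choose_spec.2.symm
  hid := X.node_key2 i G top hub
    (Exists.choose (⟨top, htop, rfl⟩ : X.anode i top ∈ X.anode i '' G))
    (Exists.choose_spec (⟨top, htop, rfl⟩ : X.anode i top ∈ X.anode i '' G)).1
    (Exists.choose_spec (⟨top, htop, rfl⟩ : X.anode i top ∈ X.anode i '' G)).2.symm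

lemma Ctx.node_h (i : X.ii) (G : Set (X.JJ i)) (top : X.JJ i) (htop : top ∈ G)
    (hub : ∀ x ∈ G, x ≤ top) (hcard : #G < lam) (x : X.JJ i) (hx : x ∈ G)
    (ht : X.anode i x ∈ (X.node i G top htop hub hcard).T) :
    (X.node i G top htop hub hcard).h (X.anode i x) ht =
      (X.DD i).map (homOfLE (hub x hx)) := by
  have key : ∀ (y : X.JJ i) (hy : y ∈ G) (he : X.anode i x = X.anode i y),
      eqToHom (congrArg X.obj he) ≫ (X.DD i).map (homOfLE (hub y hy)) =
        (X.DD i).map (homOfLE (hub x hx)) := by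
    intro y hy he
    have hyx : y = x := (X.anode_inj he).symm
    subst hyx
    erw [eqToHom_refl, Category.id_comp]
    rfl
  exact key ht.choose ht.choose_spec.1 ht.choose_spec.2.symm

lemma Ctx.node_le (i : X.ii) (G G' : Set (X.JJ i)) (top top' : X.JJ i)
    (htop : top ∈ G) (hub : ∀ x ∈ G, x ≤ top) (hcard : #G < lam)
    (htop' : top' ∈ G') (hub' : ∀ x ∈ G', x ≤ top') (hcard' : #G' < lam)
    (hsub : G ⊆ G') :
    X.node i G top htop hub hcard ≤ X.node i G' top' htop' hub' hcard' := by
  refine ⟨Set.image_mono hsub, ?_⟩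
  rintro t ⟨x, hx, rfl⟩
  show (X.node i G' top' htop' hub' hcard').h (X.anode i x) ⟨x, hsub hx, rfl⟩ =
    (X.node i G top htop hub hcard).h (X.anode i x) ⟨x, hx, rfl⟩ ≫
      (X.node i G' top' htop' hub' hcard').h (X.anode i top) ⟨top, hsub htop, rfl⟩
  erw [X.node_h i G' top' htop' hub' hcard' x (hsub hx),
    X.node_h i G top htop hub hcard x hx,
    X.node_h i G' top' htop' hub' hcard' top (hsub htop),
    ← Functor.map_comp, homOfLE_comp]

lemma Ctx.node_map (i : X.ii) (G G' : Set (X.JJ i)) (top top' : X.JJ i)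
    (htop : top ∈ G) (hub : ∀ x ∈ G, x ≤ top) (hcard : #G < lam)
    (htop' : top' ∈ G') (hub' : ∀ x ∈ G', x ≤ top') (hcard' : #G' < lam)
    (hsub : G ⊆ G') :
    X.Dp.map (homOfLE
      (X.node_le i G G' top top' htop hub hcard htop' hub' hcard' hsub)) =
      (X.DD i).map (homOfLE (hub' top (hsub htop))) := by
  show (X.node i G' top' htop' hub' hcard').h (X.anode i top) ⟨top, hsub htop, rfl⟩ = _
  exact X.node_h i G' top' htop' hub' hcard' top (hsub htop) ⟨top, hsub htop, rfl⟩

theorem Ctx.Pdirected : IsCardDirected lam X.P := by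
  intro S hS
  -- the union of all supports
  set T : Set X.A := ⋃ p : S, (p : X.P).T with hTdef
  have hT : #T < lam := by
    refine lt_of_le_of_lt (Cardinal.mk_iUnion_le _) ?_
    exact Cardinal.mul_lt_of_lt X.lamreg.aleph0_le hS
      (Cardinal.iSup_lt_of_isRegular X.lamreg hS (fun p => (p : X.P).card))
  -- the type of constraints
  let Q : Type v := Σ p : S, {t : X.A // t ∈ (p : X.P).T}
  have hQ : #Q < lam := by
    rw [Cardinal.mk_sigma]
    exact Cardinal.sum_lt_of_isRegular X.lamreg hS (fun p => (p : X.P).card)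
  -- a bound on ranks and sizes
  have hβ0 : (⨆ t : T, X.rk t.1) < lam :=
    Cardinal.iSup_lt_of_isRegular X.lamreg hT (fun t => X.rk_lt t.1)
  have hTQ : #T + #Q < lam := Cardinal.add_lt_of_lt X.lamreg.aleph0_le hT hQ
  obtain ⟨i, hi⟩ := X.unbdd (max (⨆ t : T, X.rk t.1) (Order.succ (#T + #Q)))
    (max_lt hβ0 (X.lamlim _ hTQ))
  have hrk : ∀ t : T, X.rk t.1 ≤ X.mu i := fun t =>
    le_trans (le_trans (le_ciSup (Cardinal.bddAbove_range _) t) (le_max_left _ _)) hi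
  have hTmu : #T < X.mu i :=
    lt_of_lt_of_le (lt_of_le_of_lt le_self_add (Order.lt_succ (#T + #Q)))
      (le_trans (le_max_right _ _) hi)
  have hQmu : #Q < X.mu i :=
    lt_of_lt_of_le (lt_of_le_of_lt le_add_self (Order.lt_succ (#T + #Q)))
      (le_trans (le_max_right _ _) hi)
  -- factor each element through presentation i
  have hfac : ∀ t : T, ∃ (j : X.JJ i) (g : X.obj t.1 ⟶ (X.DD i).obj j),
      g ≫ X.fι i j = X.fM t.1 := fun t => X.factor i t.1 (hrk t) (X.fM t.1)
  choose j0 g0 hg0 using hfac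
  -- memberships
  let tm : Q → T := fun q => ⟨q.2.1, Set.mem_iUnion.mpr ⟨q.1, q.2.2⟩⟩
  let am : Q → T := fun q => ⟨(q.1 : X.P).a, Set.mem_iUnion.mpr ⟨q.1, (q.1 : X.P).amem⟩⟩
  -- equalize the constraints
  have heq : ∀ q : Q, ∃ (k : X.JJ i) (h1 : j0 (tm q) ≤ k) (h2 : j0 (am q) ≤ k),
      g0 (tm q) ≫ (X.DD i).map (homOfLE h1) =
        ((q.1 : X.P).h q.2.1 q.2.2 ≫ g0 (am q)) ≫ (X.DD i).map (homOfLE h2) := by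
    intro q
    obtain ⟨k, hk1, hk2⟩ := X.JJ_pair i (j0 (tm q)) (j0 (am q))
    have hover : (g0 (tm q) ≫ (X.DD i).map (homOfLE hk1)) ≫ X.fι i k =
        (((q.1 : X.P).h q.2.1 q.2.2 ≫ g0 (am q)) ≫ (X.DD i).map (homOfLE hk2)) ≫
          X.fι i k := by
      rw [Category.assoc, X.fι_nat, hg0, Category.assoc, Category.assoc, X.fι_nat, hg0]
      exact ((q.1 : X.P).comm q.2.1 q.2.2).symm
    obtain ⟨k', hk', heq'⟩ := X.equalize i q.2.1 (hrk (tm q)) _ _ hover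
    refine ⟨k', le_trans hk1 hk', le_trans hk2 hk', ?_⟩
    have e1 : (homOfLE (le_trans hk1 hk') : _ ⟶ k') = homOfLE hk1 ≫ homOfLE hk' :=
      (homOfLE_comp hk1 hk').symm
    have e2 : (homOfLE (le_trans hk2 hk') : _ ⟶ k') = homOfLE hk2 ≫ homOfLE hk' :=
      (homOfLE_comp hk2 hk').symm
    rw [e1, e2, Functor.map_comp, Functor.map_comp, ← Category.assoc, ← Category.assoc]
    exact heq'
  choose k1 hka hkb hkeq using heq
  -- a common upper stage
  obtain ⟨js, hjs⟩ := X.dir i (Set.range j0 ∪ Set.range k1) (by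
    refine lt_of_le_of_lt (Cardinal.mk_union_le _ _) ?_
    exact Cardinal.add_lt_of_lt (X.mureg i).aleph0_le
      (lt_of_le_of_lt Cardinal.mk_range_le hTmu)
      (lt_of_le_of_lt Cardinal.mk_range_le hQmu))
  have hj0js : ∀ t : T, j0 t ≤ js := fun t => hjs _ (Or.inl ⟨t, rfl⟩)
  have hk1js : ∀ q : Q, k1 q ≤ js := fun q => hjs _ (Or.inr ⟨q, rfl⟩)
  -- the glued maps into stage js
  let vt : ∀ t : T, X.obj t.1 ⟶ (X.DD i).obj js := fun t =>
    g0 t ≫ (X.DD i).map (homOfLE (hj0js t))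
  have hvtM : ∀ t : T, vt t ≫ X.fι i js = X.fM t.1 := by
    intro t
    rw [Category.assoc, X.fι_nat, hg0]
  have hcoh : ∀ q : Q, vt (tm q) = (q.1 : X.P).h q.2.1 q.2.2 ≫ vt (am q) := by
    intro q
    have e1 : (homOfLE (hj0js (tm q)) : _ ⟶ js) = homOfLE (hka q) ≫ homOfLE (hk1js q) :=
      (homOfLE_comp _ _).symm
    have e2 : (homOfLE (hj0js (am q)) : _ ⟶ js) = homOfLE (hkb q) ≫ homOfLE (hk1js q) :=
      (homOfLE_comp _ _).symm
    show g0 (tm q) ≫ _ = _ ≫ g0 (am q) ≫ _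
    rw [e1, e2, Functor.map_comp, Functor.map_comp, ← Category.assoc, hkeq q]
    simp [Category.assoc]
  -- fresh tag and new vertex
  obtain ⟨tag, htag⟩ := X.fresh T hT
  refine ⟨⟨insert ((⟨⟨i, js⟩, tag⟩ : X.A)) T, X.card_insert hT _, ⟨⟨i, js⟩, tag⟩,
    Set.mem_insert _ _, fun t ht => if he : t = ⟨⟨i, js⟩, tag⟩ then
      eqToHom (congrArg X.obj he) else vt ⟨t, (Set.mem_insert_iff.mp ht).resolve_left he⟩,
    ?_, ?_⟩, ?_⟩
  · intro t ht
    by_cases he : t = ⟨⟨i, js⟩, tag⟩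
    · subst he
      erw [dif_pos rfl, show eqToHom (congrArg X.obj rfl) = 𝟙 _ from eqToHom_refl _ _,
        Category.id_comp]
    · erw [dif_neg he]
      exact hvtM _
  · erw [dif_pos rfl]
    exact eqToHom_refl _ _
  · intro p hp
    have hsub : p.T ⊆ insert (⟨⟨i, js⟩, tag⟩ : X.A) T := fun t ht =>
      Set.mem_insert_iff.mpr (Or.inr (Set.mem_iUnion.mpr ⟨⟨p, hp⟩, ht⟩))
    refine ⟨hsub, ?_⟩
    intro t ht
    have h1 : t ≠ ⟨⟨i, js⟩, tag⟩ := fun he =>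
      htag t (Set.mem_iUnion.mpr ⟨⟨p, hp⟩, ht⟩) (congrArg Prod.snd he)
    have h2 : p.a ≠ ⟨⟨i, js⟩, tag⟩ := fun he =>
      htag p.a (Set.mem_iUnion.mpr ⟨⟨p, hp⟩, p.amem⟩) (congrArg Prod.snd he)
    show (if he : t = _ then _ else _) = p.h t ht ≫ (if he : p.a = _ then _ else _)
    erw [dif_neg h1, dif_neg h2]
    exact hcoh ⟨⟨p, hp⟩, ⟨t, ht⟩⟩

theorem Ctx.isColimitCP : Nonempty (IsColimit X.cP) := by
  haveI : HasColimitsOfShape X.P K := X.hasCol X.P inferInstance X.Pdirected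
  set c' := colimit.cocone X.Dp with hc'def
  have hc' : IsColimit c' := colimit.isColimit X.Dp
  set w : c'.pt ⟶ M := hc'.desc X.cP with hwdef
  have hw : ∀ p, c'.ι.app p ≫ w = X.fM p.a := fun p => hc'.fac X.cP p
  -- a base presentation
  obtain ⟨i0, -⟩ := X.unbdd 0 X.lamreg.pos
  have hone : (1 : Cardinal.{v}) < lam := lt_of_lt_of_le Cardinal.one_lt_aleph0 X.lamreg.aleph0_le
  let sing : X.JJ i0 → X.P := fun j => X.node i0 {j} j rfl
    (fun x hx => le_of_eq hx) (by rw [Cardinal.mk_singleton]; exact hone)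
  let ψ : ∀ j : X.JJ i0, (X.DD i0).obj j ⟶ c'.pt := fun j => c'.ι.app (sing j)
  have ψnat : ∀ {j j' : X.JJ i0} (h : j ≤ j'),
      (X.DD i0).map (homOfLE h) ≫ ψ j' = ψ j := by
    intro j j' h
    obtain ⟨k, hk1, hk2⟩ := X.JJ_pair i0 j j'
    have hubk : ∀ x ∈ ({j, j', k} : Set (X.JJ i0)), x ≤ k := by
      rintro x (rfl | rfl | rfl)
      exacts [hk1, hk2, le_rfl]
    have hcardk : #({j, j', k} : Set (X.JJ i0)) < lam := by
      refine lt_of_lt_of_le ?_ X.lamreg.aleph0_le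
      exact (((Set.finite_singleton k).insert j').insert j).lt_aleph0
    have hkG : k ∈ ({j, j', k} : Set (X.JJ i0)) := by right; right; rfl
    set nd := X.node i0 {j, j', k} k hkG hubk hcardk with hnd
    have le1 : sing j ≤ nd := X.node_le i0 {j} {j, j', k} j k rfl _ _ hkG hubk hcardk
      (by rintro x rfl; left; rfl)
    have le2 : sing j' ≤ nd := X.node_le i0 {j'} {j, j', k} j' k rfl _ _ hkG hubk hcardk
      (by rintro x rfl; right; left; rfl)
    have hm1 : X.Dp.map (homOfLE le1) = (X.DD i0).map (homOfLE (hubk j (by left; rfl))) :=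
      X.node_map i0 {j} {j, j', k} j k rfl _ _ hkG hubk hcardk (by rintro x rfl; left; rfl)
    have hm2 : X.Dp.map (homOfLE le2) =
        (X.DD i0).map (homOfLE (hubk j' (by right; left; rfl))) :=
      X.node_map i0 {j'} {j, j', k} j' k rfl _ _ hkG hubk hcardk (by rintro x rfl; right; left; rfl)
    have e1 : ψ j = (X.DD i0).map (homOfLE (hubk j (by left; rfl))) ≫ c'.ι.app nd := by
      rw [← hm1]
      exact (c'.w (homOfLE le1)).symm
    have e2 : ψ j' = (X.DD i0).map (homOfLE (hubk j' (by right; left; rfl))) ≫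
        c'.ι.app nd := by
      rw [← hm2]
      exact (c'.w (homOfLE le2)).symm
    erw [e1, e2, ← Category.assoc, ← Functor.map_comp, homOfLE_comp]
  -- the candidate inverse
  set v : M ⟶ c'.pt := X.descM i0 ψ ψnat with hvdef
  have hv : ∀ j, X.fι i0 j ≫ v = ψ j := fun j => X.descM_fac i0 ψ ψnat j
  have hvw : v ≫ w = 𝟙 M := by
    apply X.homext i0
    intro j
    rw [← Category.assoc, hv j, Category.comp_id]
    exact hw (sing j)
  -- restricted monomorphy of w
  have hmono : ∀ (p : X.P) (x y : X.Dp.obj p ⟶ c'.pt), x ≫ w = y ≫ w → x = y := by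
    intro p x y hxy
    haveI := X.pres p.a (down_directed X.Pdirected (le_of_lt (X.rk_lt p.a)))
    have hcT : IsColimit ((coyoneda.obj (Opposite.op (X.obj p.a))).mapCocone c') :=
      isColimitOfPreserves _ hc'
    obtain ⟨p1, x1, hx1⟩ := Types.jointly_surjective _ hcT x
    obtain ⟨p2, y1, hy1⟩ := Types.jointly_surjective _ hcT y
    obtain ⟨r, hr⟩ := X.Pdirected {p1, p2} (by
      refine lt_of_lt_of_le ?_ X.lamreg.aleph0_le
      exact ((Set.finite_singleton p2).insert p1).lt_aleph0)
    have hp1 : p1 ≤ r := hr p1 (by left; rfl)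
    have hp2 : p2 ≤ r := hr p2 (by right; rfl)
    set x2 : X.obj p.a ⟶ X.Dp.obj r := x1 ≫ X.Dp.map (homOfLE hp1) with hx2def
    set y2 : X.obj p.a ⟶ X.Dp.obj r := y1 ≫ X.Dp.map (homOfLE hp2) with hy2def
    have hx2 : x2 ≫ c'.ι.app r = x := by
      rw [Category.assoc, c'.w (homOfLE hp1)]
      exact hx1
    have hy2 : y2 ≫ c'.ι.app r = y := by
      rw [Category.assoc, c'.w (homOfLE hp2)]
      exact hy1
    have hover : x2 ≫ X.fM r.a = y2 ≫ X.fM r.a := by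
      rw [← hw r, ← Category.assoc, ← Category.assoc, hx2, hy2]
      exact hxy
    obtain ⟨i2, hi2⟩ := X.unbdd (max (X.rk p.a) (X.rk r.a))
      (max_lt (X.rk_lt p.a) (X.rk_lt r.a))
    obtain ⟨m, g, hg⟩ := X.factor i2 r.a (le_trans (le_max_right _ _) hi2) (X.fM r.a)
    have hovm : (x2 ≫ g) ≫ X.fι i2 m = (y2 ≫ g) ≫ X.fι i2 m := by
      erw [Category.assoc x2 g (X.fι i2 m), Category.assoc y2 g (X.fι i2 m), hg]
      exact hover
    obtain ⟨m', hm, hEq⟩ := X.equalize i2 p.a (le_trans (le_max_left _ _) hi2) _ _ hovm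
    obtain ⟨tg, htg⟩ := X.fresh r.T r.card
    have ha' : (⟨⟨i2, m'⟩, tg⟩ : X.A) ∉ r.T := fun h => htg _ h rfl
    have hG : (g ≫ (X.DD i2).map (homOfLE hm)) ≫ X.fM (⟨⟨i2, m'⟩, tg⟩ : X.A) =
        X.fM r.a := by
      rw [show X.fM (⟨⟨i2, m'⟩, tg⟩ : X.A) = X.fι i2 m' from rfl,
        Category.assoc g _ (X.fι i2 m'), X.fι_nat]
      exact hg
    set r' := X.ext r ⟨⟨i2, m'⟩, tg⟩ ha' (g ≫ (X.DD i2).map (homOfLE hm)) hG with hr'def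
    have hler : r ≤ r' := X.ext_le r _ ha' _ hG
    have hmap : X.Dp.map (homOfLE hler) = g ≫ (X.DD i2).map (homOfLE hm) :=
      X.ext_map r _ ha' _ hG
    have : x2 ≫ X.Dp.map (homOfLE hler) = y2 ≫ X.Dp.map (homOfLE hler) := by
      erw [hmap, ← Category.assoc, ← Category.assoc]
      exact hEq
    calc x = (x2 ≫ c'.ι.app r : X.Dp.obj p ⟶ c'.pt) := hx2.symm
    _ = (x2 ≫ X.Dp.map (homOfLE hler) ≫ c'.ι.app r' : X.Dp.obj p ⟶ c'.pt) := by rw [c'.w (homOfLE hler)]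
    _ = (y2 ≫ X.Dp.map (homOfLE hler) ≫ c'.ι.app r' : X.Dp.obj p ⟶ c'.pt) := by
        erw [← Category.assoc, this, Category.assoc]
    _ = (y2 ≫ c'.ι.app r : X.Dp.obj p ⟶ c'.pt) := by rw [c'.w (homOfLE hler)]
    _ = y := hy2
  have hwv : w ≫ v = 𝟙 c'.pt := by
    apply hc'.hom_ext
    intro p
    have h2 : (c'.ι.app p ≫ w ≫ v) ≫ w = c'.ι.app p ≫ w := by
      simp only [Category.assoc, hvw, Category.comp_id]
    have h3 := hmono p _ _ h2
    simpa using h3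
  haveI : IsIso (hc'.desc X.cP) := ⟨v, hwv, hvw⟩
  exact ⟨IsColimit.ofPointIso hc'⟩

end Stmt12Aux

open Stmt12Aux in
/-- If `λ` is weakly inaccessible and `K` is `(μ, <λ)`-accessible for unboundedly many
regular `μ < λ`, then `K` is `(λ, <λ)`-accessible. -/
theorem stmt12 {K : Type u} [Category.{v} K] (lam : Cardinal.{v})
    (hreg : lam.IsRegular) (hlim : Order.IsSuccLimit lam) (hunc : ℵ₀ < lam)
    (hacc : ∀ κ < lam, ∃ μ : Cardinal.{v}, κ ≤ μ ∧ μ < lam ∧ μ.IsRegular ∧ IsAccCat μ lam K) :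
    IsAccCat lam lam K := by
  obtain ⟨μ0, -, hμ0lt, hμ0reg, hacc0⟩ := hacc 0 hreg.pos
  have cond1 : HasMuDirectedColimits lam K := by
    intro J pre hJ
    exact hacc0.1 J pre (down_directed hJ hμ0lt.le)
  refine ⟨cond1, hacc0.2.1, ?_⟩
  intro M
  let e := equivShrink (Set.Iio lam)
  have H : ∀ i : Shrink.{v} (Set.Iio lam), ∃ (μ : Cardinal.{v}) (J : Type v)
      (pre : Preorder J) (D : J ⥤ K) (c : Cocone D), μ.IsRegular ∧ (e.symm i).1 ≤ μ ∧
      IsCardDirected μ J ∧ (∀ j, IsLtPresentableObj lam (D.obj j)) ∧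
      Nonempty (IsColimit c) ∧ c.pt = M := by
    intro i
    obtain ⟨μ, hκμ, hμlt, hμreg, hA⟩ := hacc (e.symm i).1 (e.symm i).2
    obtain ⟨J, pre, D, c, hdir, hltp, hcolim, hpt⟩ := hA.2.2 M
    exact ⟨μ, J, pre, D, c, hμreg, hκμ, hdir, hltp, hcolim, hpt⟩
  choose mu JJ pre DD co h1 h2 h3 h4 h5 h6 using H
  let X : Ctx lam M :=
    { lamreg := hreg
      lamlim := fun β hβ => hlim.succ_lt hβ
      lam0 := hunc
      hasCol := cond1
      ii := Shrink.{v} (Set.Iio lam)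
      JJ := JJ
      pre := pre
      mu := mu
      mureg := h1
      dir := h3
      DD := DD
      co := co
      colim := fun i => (h5 i).some
      hpt := h6
      ltp := h4
      unbdd := fun β hβ => ⟨e ⟨β, hβ⟩, by
        have h0 : (e.symm (e ⟨β, hβ⟩)).1 = β := by rw [Equiv.symm_apply_apply]
        exact le_of_eq_of_le h0.symm (h2 _)⟩
      Th := (Cardinal.ord lam).ToType
      hTh := by rw [Cardinal.mk_toType, Cardinal.card_ord] }
  exact ⟨X.P, inferInstance, X.Dp, X.cP, X.Pdirected, fun p => X.ltp p.a.1.1 p.a.1.2,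
    X.isColimitCP, rfl⟩
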